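/- The factorial Schur polynomial satisfies the combinatorial formula s_μ(y_1,...,y_n | A) = Σ_T Π_{(i,j)∈μ} (y_{T(i,j)} - A_{j - i + n + 1 - T(i,j)}), where the sum is over all reverse tableaux T of shape μ with entries in {1,...,n}. -/

import Mathlib

open Finset
open scoped Matrix
open scoped Classical

section FactorialSchur
variable {R : Type*} [CommRing R]

def Pp (a : ℕ → R) (m : ℕ) (x : R) : R := ∏ k ∈ Finset.range m, (x - a k)
def cE (y0 : R) (a : ℕ → R) (r m' : ℕ) : R := ∏ k ∈ Finset.Ico (r+1) m', (y0 - a k)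

def Cond (n M : ℕ) (μ : Fin n → ℕ) (T : Fin n → Fin M → Fin n) : Prop :=
  (∀ (i : Fin n) (j : Fin M), ¬ ((j : ℕ) < μ i) → (T i j : ℕ) = 0) ∧
  (∀ (i i' : Fin n) (j : Fin M), i < i' → (j : ℕ) < μ i' → (T i' j : ℕ) < (T i j : ℕ)) ∧
  (∀ (i : Fin n) (j j' : Fin M), j ≤ j' → (j' : ℕ) < μ i → (T i j' : ℕ) ≤ (T i j : ℕ))

def Wt (n M : ℕ) (y : Fin n → R) (a : ℕ → R) (μ : Fin n → ℕ)
    (T : Fin n → Fin M → Fin n) : R :=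
  ∏ i : Fin n, ∏ j ∈ Finset.univ.filter (fun j : Fin M => (j : ℕ) < μ i),
    (y (T i j) - a (((j : ℕ) + n) - ((i : ℕ) + (T i j : ℕ) + 1)))


theorem Pp_succ (a : ℕ → R) (m : ℕ) (x : R) : Pp a (m+1) x = Pp a m x * (x - a m) := by
  simp [Pp, Finset.prod_range_succ]

theorem Pp_split (a : ℕ → R) {m m' : ℕ} (h : m ≤ m') (x : R) :
    Pp a m' x = Pp a m x * ∏ k ∈ Finset.Ico m m', (x - a k) := by
  rw [Pp, Pp, Finset.range_eq_Ico,
    ← Finset.prod_Ico_consecutive (fun k => (x - a k)) (Nat.zero_le m) h, Finset.range_eq_Ico]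

theorem cE_split (y0 : R) (a : ℕ → R) {r m m' : ℕ} (hr : r + 1 ≤ m) (h : m ≤ m') :
    cE y0 a r m' = cE y0 a r m * ∏ k ∈ Finset.Ico m m', (y0 - a k) := by
  rw [cE, cE, ← Finset.prod_Ico_consecutive (fun k => (y0 - a k)) hr h]

theorem keyP (a : ℕ → R) (z x : R) (m : ℕ) :
    Pp a m x = Pp a m z + (x - z) * ∑ r ∈ range m, cE z a r m * Pp a r x := by
  induction m with
  | zero => simp [Pp]
  | succ m ih =>
    have h1 : ∀ r ∈ range m, cE z a r (m+1) * Pp a r x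
        = (z - a m) * (cE z a r m * Pp a r x) := by
      intro r hr
      rw [Finset.mem_range] at hr
      rw [cE_split z a (by omega : r + 1 ≤ m) (by omega : m ≤ m + 1)]
      have : ∏ k ∈ Finset.Ico m (m+1), (z - a k) = z - a m := by
        simp
      rw [this]; ring
    rw [Finset.sum_range_succ, Finset.sum_congr rfl h1, ← Finset.mul_sum]
    have h2 : cE z a m (m+1) = 1 := by simp [cE]
    rw [h2, Pp_succ, Pp_succ]
    linear_combination (z - a m) * ih


/-- products over `{j : Fin M | ↑j ∈ s}` equal products over `s ⊆ range M`. -/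
theorem prod_fin_mem {M : ℕ} (s : Finset ℕ) (hs : ∀ t ∈ s, t < M) (F : ℕ → R) :
    ∏ j ∈ Finset.univ.filter (fun j : Fin M => (j : ℕ) ∈ s), F (j : ℕ)
      = ∏ t ∈ s, F t := by
  apply Finset.prod_bij' (fun (j : Fin M) _ => (j : ℕ))
    (fun (t : ℕ) (ht : t ∈ s) => (⟨t, hs t ht⟩ : Fin M))
    (fun j hj => by simpa using (Finset.mem_filter.mp hj).2)
    (fun t ht => by simp [ht])
    (fun j hj => by rfl)
    (fun t ht => by rfl)
    (fun j hj => by rfl)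

theorem prod_fin_lt {M b : ℕ} (hb : b ≤ M) (F : ℕ → R) :
    ∏ j ∈ Finset.univ.filter (fun j : Fin M => (j : ℕ) < b), F (j : ℕ)
      = ∏ t ∈ Finset.range b, F t := by
  rw [← prod_fin_mem (Finset.range b) (fun t ht => lt_of_lt_of_le (Finset.mem_range.mp ht) hb) F]
  simp

theorem card_fin_lt {M b : ℕ} (hb : b ≤ M) :
    (Finset.univ.filter (fun j : Fin M => (j : ℕ) < b)).card = b := by
  apply Finset.card_bij' (fun (j : Fin M) (hj : j ∈ _) => ((j : ℕ) : ℕ))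
    (fun (t : ℕ) (ht : t ∈ Finset.range b) => (⟨t, lt_of_lt_of_le (Finset.mem_range.mp ht) hb⟩ : Fin M))
    (fun j hj => by simpa using (Finset.mem_filter.mp hj).2)
    (fun t ht => by simp [Finset.mem_range.mp ht])
    (fun j hj => by rfl)
    (fun t ht => by rfl) |>.trans (Finset.card_range b)

/-- a downward closed finset of `Fin M` is an initial segment -/
theorem dc_mem_iff {M : ℕ} (s : Finset (Fin M))
    (hdc : ∀ j j' : Fin M, j ≤ j' → j' ∈ s → j ∈ s) (j : Fin M) :
    j ∈ s ↔ (j : ℕ) < s.card := by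
  constructor
  · intro hj
    have hsub : Finset.univ.filter (fun j' : Fin M => (j' : ℕ) < (j : ℕ) + 1) ⊆ s := by
      intro j' hj'
      have : (j' : ℕ) < (j : ℕ) + 1 := (Finset.mem_filter.mp hj').2
      exact hdc j' j (by omega) hj
    have := Finset.card_le_card hsub
    rw [card_fin_lt (by omega : (j:ℕ)+1 ≤ M)] at this
    omega
  · intro hj
    by_contra hns
    have hsub : s ⊆ Finset.univ.filter (fun j' : Fin M => (j' : ℕ) < (j : ℕ)) := by
      intro j' hj'
      simp only [Finset.mem_filter, Finset.mem_univ, true_and]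
      by_contra hle
      exact hns (hdc j j' (by omega) hj')
    have := Finset.card_le_card hsub
    rw [card_fin_lt (by omega : (j:ℕ) ≤ M)] at this
    omega



theorem vdm_split (n : ℕ) (y : Fin (n+1) → R) :
    (∏ i : Fin (n+1), ∏ j ∈ Finset.univ.filter (fun j : Fin (n+1) => i < j), (y i - y j))
    = (∏ i : Fin n, (y 0 - y i.succ)) *
      ∏ i : Fin n, ∏ j ∈ Finset.univ.filter (fun j : Fin n => i < j), (y i.succ - y j.succ) := by
  have conv : ∀ (i : Fin (n+1)),
      (∏ j ∈ Finset.univ.filter (fun j : Fin (n+1) => i < j), (y i - y j))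
      = ∏ j : Fin (n+1), if i < j then y i - y j else 1 := by
    intro i; rw [Finset.prod_filter]
  have conv2 : ∀ (i : Fin n),
      (∏ j ∈ Finset.univ.filter (fun j : Fin n => i < j), (y i.succ - y j.succ))
      = ∏ j : Fin n, if i < j then y i.succ - y j.succ else 1 := by
    intro i; rw [Finset.prod_filter]
  simp only [conv, conv2]
  rw [Fin.prod_univ_succ]
  congr 1
  · rw [Fin.prod_univ_succ]
    simp [Fin.succ_pos]
  · apply Finset.prod_congr rfl
    intro i _
    rw [Fin.prod_univ_succ]
    have : ¬ (i.succ < (0 : Fin (n+1))) := by simp [Fin.not_lt_zero]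
    simp only [this, if_false, one_mul]
    apply Finset.prod_congr rfl
    intro j _
    congr 1
    simp [Fin.succ_lt_succ_iff]

/-- column bound: in a reverse tableau with `n+1` letters, the entry in row `i`
(0-based) is at most `n - i`. -/
theorem col_bound {n M : ℕ} {μ : Fin (n+1) → ℕ} (hμ : Antitone μ)
    {T : Fin (n+1) → Fin M → Fin (n+1)} (hT : Cond (n+1) M μ T) :
    ∀ (i : Fin (n+1)) (j : Fin M), (j : ℕ) < μ i → (T i j : ℕ) + (i : ℕ) ≤ n := by
  obtain ⟨h1, h2, h3⟩ := hT
  intro i j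
  induction i using Fin.induction with
  | zero => intro _; have := (T 0 j).isLt; simp only [Fin.val_zero]; omega
  | succ i ih =>
    intro hj
    have hji : (j : ℕ) < μ i.castSucc := lt_of_lt_of_le hj (hμ (by
      exact le_of_lt (Fin.castSucc_lt_succ (i := i))))
    have := h2 i.castSucc i.succ j (Fin.castSucc_lt_succ (i := i)) hj
    have := ih hji
    simp only [Fin.coe_castSucc] at *
    simp only [Fin.val_succ]
    omega


section Comb
variable {n M : ℕ}

def nuF (n : ℕ) (r : Fin n → ℕ) : Fin n → ℕ := fun j => r j - (n - 1 - (j : ℕ))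

def toSub (n M : ℕ) (T : Fin (n+1) → Fin M → Fin (n+1)) : Fin n → Fin M → Fin n :=
  fun i j => ⟨(T i.castSucc j : ℕ) - 1, by
    have h1 := (T i.castSucc j).isLt; have h2 := i.isLt; omega⟩

def nuT (n M : ℕ) (μ : Fin (n+1) → ℕ) (T : Fin (n+1) → Fin M → Fin (n+1)) : Fin n → ℕ :=
  fun i => (Finset.univ.filter
    (fun j : Fin M => (j : ℕ) < μ i.castSucc ∧ (T i.castSucc j : ℕ) ≠ 0)).card

def rT (n M : ℕ) (μ : Fin (n+1) → ℕ) (T : Fin (n+1) → Fin M → Fin (n+1)) : Fin n → ℕ :=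
  fun j => nuT n M μ T j + (n - 1 - (j : ℕ))

def fro (n M : ℕ) (r : Fin n → ℕ) (T' : Fin n → Fin M → Fin n) :
    Fin (n+1) → Fin M → Fin (n+1) :=
  fun i => Fin.lastCases (fun _ => 0)
    (fun i' j => if (j : ℕ) < nuF n r i' then (T' i' j).succ else 0) i

@[simp] theorem fro_last (r : Fin n → ℕ) (T' : Fin n → Fin M → Fin n) (j : Fin M) :
    fro n M r T' (Fin.last n) j = 0 := by
  simp [fro]

@[simp] theorem fro_castSucc (r : Fin n → ℕ) (T' : Fin n → Fin M → Fin n) (i : Fin n) (j : Fin M) :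
    fro n M r T' i.castSucc j = if (j : ℕ) < nuF n r i then (T' i j).succ else 0 := by
  simp [fro]

theorem nuT_iff {μ : Fin (n+1) → ℕ} {T : Fin (n+1) → Fin M → Fin (n+1)}
    (hT : Cond (n+1) M μ T) (i : Fin n) (j : Fin M) :
    (j : ℕ) < nuT n M μ T i ↔ ((j : ℕ) < μ i.castSucc ∧ (T i.castSucc j : ℕ) ≠ 0) := by
  obtain ⟨h1, h2, h3⟩ := hT
  have := dc_mem_iff (Finset.univ.filter
      (fun j : Fin M => (j : ℕ) < μ i.castSucc ∧ (T i.castSucc j : ℕ) ≠ 0))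
    (by
      intro j j' hle hj'
      simp only [Finset.mem_filter, Finset.mem_univ, true_and] at hj' ⊢
      refine ⟨by omega, ?_⟩
      have := h3 i.castSucc j j' hle hj'.1
      omega) j
  simp only [Finset.mem_filter, Finset.mem_univ, true_and] at this
  rw [nuT, ← this]

theorem nuT_le {μ : Fin (n+1) → ℕ} {T : Fin (n+1) → Fin M → Fin (n+1)}
    (hM : ∀ i, μ i ≤ M) (i : Fin n) :
    nuT n M μ T i ≤ μ i.castSucc := by
  have hsub : (Finset.univ.filter
      (fun j : Fin M => (j : ℕ) < μ i.castSucc ∧ (T i.castSucc j : ℕ) ≠ 0))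
      ⊆ Finset.univ.filter (fun j : Fin M => (j : ℕ) < μ i.castSucc) := by
    intro j hj
    simp only [Finset.mem_filter, Finset.mem_univ, true_and] at hj ⊢
    exact hj.1
  have := Finset.card_le_card hsub
  rw [card_fin_lt (hM i.castSucc)] at this
  exact this

theorem le_nuT {μ : Fin (n+1) → ℕ} {T : Fin (n+1) → Fin M → Fin (n+1)}
    (hμ : Antitone μ) (hM : ∀ i, μ i ≤ M) (hT : Cond (n+1) M μ T) (i : Fin n) :
    μ i.succ ≤ nuT n M μ T i := by
  obtain ⟨h1, h2, h3⟩ := hT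
  have hsub : Finset.univ.filter (fun j : Fin M => (j : ℕ) < μ i.succ)
      ⊆ (Finset.univ.filter
      (fun j : Fin M => (j : ℕ) < μ i.castSucc ∧ (T i.castSucc j : ℕ) ≠ 0)) := by
    intro j hj
    simp only [Finset.mem_filter, Finset.mem_univ, true_and] at hj ⊢
    refine ⟨lt_of_lt_of_le hj (hμ (le_of_lt (Fin.castSucc_lt_succ (i := i)))), ?_⟩
    have := h2 i.castSucc i.succ j (Fin.castSucc_lt_succ (i := i)) hj
    omega
  have := Finset.card_le_card hsub
  rw [card_fin_lt (hM i.succ)] at this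
  exact this

theorem row_last {μ : Fin (n+1) → ℕ} {T : Fin (n+1) → Fin M → Fin (n+1)}
    (hμ : Antitone μ) (hT : Cond (n+1) M μ T) (j : Fin M) :
    (T (Fin.last n) j : ℕ) = 0 := by
  by_cases hj : (j : ℕ) < μ (Fin.last n)
  · have := col_bound hμ hT (Fin.last n) j hj
    simp only [Fin.val_last] at this
    omega
  · exact hT.1 (Fin.last n) j hj

end Comb

section Comb2
variable {n M : ℕ}

theorem fro_cond {μ : Fin (n+1) → ℕ} (hμ : Antitone μ) (hM : ∀ i, μ i ≤ M)
    {r : Fin n → ℕ}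
    (hr : ∀ j : Fin n, μ j.succ + (n - 1 - (j : ℕ)) ≤ r j ∧ r j < μ j.castSucc + (n - (j : ℕ)))
    {T' : Fin n → Fin M → Fin n} (hT' : Cond n M (nuF n r) T') :
    Cond (n+1) M μ (fro n M r T') := by
  obtain ⟨g1, g2, g3⟩ := hT'
  have hlow : ∀ j : Fin n, μ j.succ ≤ nuF n r j := by
    intro j; have := hr j; have hj := j.isLt; simp only [nuF]; omega
  have hhigh : ∀ j : Fin n, nuF n r j ≤ μ j.castSucc := by
    intro j; have := hr j; have hj := j.isLt; simp only [nuF]; omega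
  refine ⟨?_, ?_, ?_⟩
  · intro i j hj
    induction i using Fin.lastCases with
    | last => simp
    | cast k =>
      rw [fro_castSucc, if_neg (by have := hhigh k; omega)]
      rfl
  · intro i i' j hii' hj
    induction i' using Fin.lastCases with
    | last =>
      rw [fro_last]
      induction i using Fin.lastCases with
      | last => exact absurd hii' (lt_irrefl _)
      | cast k =>
        rw [fro_castSucc, if_pos]
        · simp
        · have h1 : μ (Fin.last n) ≤ μ k.succ := hμ (Fin.le_last _)
          have := hlow k
          omega
    | cast k' =>
      induction i using Fin.lastCases with
      | last => exact absurd (lt_trans (Fin.castSucc_lt_last k') hii') (lt_irrefl _)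
      | cast k =>
        have hkk' : k < k' := by
          rwa [Fin.castSucc_lt_castSucc_iff] at hii'
        have hsucc_le : (k.succ : Fin (n+1)) ≤ k'.castSucc := by
          rw [Fin.le_def]
          simp only [Fin.val_succ, Fin.coe_castSucc]
          exact hkk'
        have hjk : (j : ℕ) < nuF n r k := by
          have h1 : μ k'.castSucc ≤ μ k.succ := hμ hsucc_le
          have := hlow k
          omega
        rw [fro_castSucc, fro_castSucc, if_pos hjk]
        by_cases hjk' : (j : ℕ) < nuF n r k'
        · rw [if_pos hjk']
          simp only [Fin.val_succ]
          have := g2 k k' j hkk' hjk'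
          omega
        · rw [if_neg hjk']
          simp only [Fin.val_succ, Fin.val_zero]
          omega
  · intro i j j' hjj' hj'
    induction i using Fin.lastCases with
    | last => simp
    | cast k =>
      rw [fro_castSucc, fro_castSucc]
      by_cases hjk' : (j' : ℕ) < nuF n r k
      · rw [if_pos hjk', if_pos (by have : (j:ℕ) ≤ (j':ℕ) := hjj'; omega)]
        simp only [Fin.val_succ]
        have := g3 k j j' hjj' hjk'
        omega
      · rw [if_neg hjk']
        simp

theorem fro_inv1 {μ : Fin (n+1) → ℕ} (hμ : Antitone μ)
    {T : Fin (n+1) → Fin M → Fin (n+1)} (hT : Cond (n+1) M μ T) :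
    fro n M (rT n M μ T) (toSub n M T) = T := by
  have hnu : nuF n (rT n M μ T) = nuT n M μ T := by
    funext j; simp only [nuF, rT, Nat.add_sub_cancel]
  funext i j
  induction i using Fin.lastCases with
  | last =>
    rw [fro_last]
    exact (Fin.ext (by rw [row_last hμ hT j]; rfl)).symm
  | cast k =>
    rw [fro_castSucc, hnu]
    by_cases hjk : (j : ℕ) < nuT n M μ T k
    · rw [if_pos hjk]
      have := ((nuT_iff hT k j).mp hjk).2
      apply Fin.ext
      simp only [Fin.val_succ, toSub]
      omega
    · rw [if_neg hjk]
      apply Fin.ext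
      simp only [Fin.val_zero]
      symm
      by_cases hjμ : (j : ℕ) < μ k.castSucc
      · have := (nuT_iff hT k j).not.mp hjk
        push_neg at this
        exact this hjμ
      · exact hT.1 k.castSucc j hjμ

theorem fro_inv2 {μ : Fin (n+1) → ℕ} (hM : ∀ i, μ i ≤ M)
    {r : Fin n → ℕ}
    (hr : ∀ j : Fin n, μ j.succ + (n - 1 - (j : ℕ)) ≤ r j ∧ r j < μ j.castSucc + (n - (j : ℕ)))
    {T' : Fin n → Fin M → Fin n} (hT' : Cond n M (nuF n r) T') :
    rT n M μ (fro n M r T') = r ∧ toSub n M (fro n M r T') = T' := by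
  have hhigh : ∀ j : Fin n, nuF n r j ≤ μ j.castSucc := by
    intro j; have := hr j; have hj := j.isLt; simp only [nuF]; omega
  have hnuT : ∀ j : Fin n, nuT n M μ (fro n M r T') j = nuF n r j := by
    intro j
    rw [nuT]
    have hset : (Finset.univ.filter
        (fun j' : Fin M => (j' : ℕ) < μ j.castSucc ∧ (fro n M r T' j.castSucc j' : ℕ) ≠ 0))
        = Finset.univ.filter (fun j' : Fin M => (j' : ℕ) < nuF n r j) := by
      ext j'
      simp only [Finset.mem_filter, Finset.mem_univ, true_and, fro_castSucc]
      constructor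
      · rintro ⟨h1, h2⟩
        by_contra hc
        rw [if_neg hc] at h2
        exact h2 rfl
      · intro h
        refine ⟨lt_of_lt_of_le h (hhigh j), ?_⟩
        rw [if_pos h]
        simp
    rw [hset, card_fin_lt (le_trans (hhigh j) (hM j.castSucc))]
  constructor
  · funext j
    have := hr j
    have hj := j.isLt
    simp only [rT, hnuT, nuF]
    omega
  · funext i j
    apply Fin.ext
    simp only [toSub, fro_castSucc]
    by_cases hjk : (j : ℕ) < nuF n r i
    · rw [if_pos hjk]
      simp
    · rw [if_neg hjk]
      have := hT'.1 i j (by intro hc; exact hjk hc)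
      simp only [Fin.val_zero]
      omega

end Comb2

section Comb3
variable {n M : ℕ} {R : Type*} [CommRing R]

theorem wt_fro (y : Fin (n+1) → R) (a : ℕ → R) {μ : Fin (n+1) → ℕ} (hM : ∀ i, μ i ≤ M)
    {r : Fin n → ℕ}
    (hr : ∀ j : Fin n, μ j.succ + (n - 1 - (j : ℕ)) ≤ r j ∧ r j < μ j.castSucc + (n - (j : ℕ)))
    (T' : Fin n → Fin M → Fin n) :
    Wt (n+1) M y a μ (fro n M r T')
      = (∏ k ∈ Finset.range (μ (Fin.last n)), (y 0 - a k)) *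
        (∏ j : Fin n, cE (y 0) a (r j) (μ j.castSucc + (n - (j : ℕ)))) *
        Wt n M (y ∘ Fin.succ) a (nuF n r) T' := by
  have hhigh : ∀ j : Fin n, nuF n r j ≤ μ j.castSucc := by
    intro j; have := hr j; have hj := j.isLt; simp only [nuF]; omega
  have hlow2 : ∀ j : Fin n, r j + 1 = nuF n r j + (n - (j : ℕ)) := by
    intro j; have := hr j; have hj := j.isLt; simp only [nuF]; omega
  rw [Wt, Fin.prod_univ_castSucc]
  -- last row
  have hlast : (∏ j ∈ Finset.univ.filter (fun j : Fin M => (j : ℕ) < μ (Fin.last n)),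
      (y (fro n M r T' (Fin.last n) j) -
        a (((j : ℕ) + (n+1)) - (((Fin.last n : Fin (n+1)) : ℕ) + (fro n M r T' (Fin.last n) j : ℕ) + 1))))
      = ∏ k ∈ Finset.range (μ (Fin.last n)), (y 0 - a k) := by
    rw [← prod_fin_lt (hM (Fin.last n)) (fun t => y 0 - a t)]
    apply Finset.prod_congr rfl
    intro j hj
    rw [fro_last]
    simp only [Fin.val_zero, Fin.val_last]
    congr 2
    omega
  rw [hlast]
  -- the other rows
  have hrow : ∀ i : Fin n,
      (∏ j ∈ Finset.univ.filter (fun j : Fin M => (j : ℕ) < μ i.castSucc),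
        (y (fro n M r T' i.castSucc j) -
          a (((j : ℕ) + (n+1)) - ((i.castSucc : ℕ) + (fro n M r T' i.castSucc j : ℕ) + 1))))
      = (∏ j ∈ Finset.univ.filter (fun j : Fin M => (j : ℕ) < nuF n r i),
          ((y ∘ Fin.succ) (T' i j) -
            a (((j : ℕ) + n) - ((i : ℕ) + (T' i j : ℕ) + 1)))) *
        cE (y 0) a (r i) (μ i.castSucc + (n - (i : ℕ))) := by
    intro i
    rw [← Finset.prod_filter_mul_prod_filter_not
      (Finset.univ.filter (fun j : Fin M => (j : ℕ) < μ i.castSucc))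
      (fun j : Fin M => (j : ℕ) < nuF n r i)]
    congr 1
    · have hset : (Finset.univ.filter (fun j : Fin M => (j : ℕ) < μ i.castSucc)).filter
          (fun j : Fin M => (j : ℕ) < nuF n r i)
          = Finset.univ.filter (fun j : Fin M => (j : ℕ) < nuF n r i) := by
        ext j
        simp only [Finset.mem_filter, Finset.mem_univ, true_and]
        constructor
        · rintro ⟨_, h⟩; exact h
        · intro h; exact ⟨lt_of_lt_of_le h (hhigh i), h⟩
      rw [hset]
      apply Finset.prod_congr rfl
      intro j hj
      have hp : (j : ℕ) < nuF n r i := by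
        simpa using (Finset.mem_filter.mp hj).2
      rw [fro_castSucc, if_pos hp]
      simp only [Fin.val_succ, Fin.coe_castSucc, Function.comp_apply]
      congr 2
      omega
    · have hset : (Finset.univ.filter (fun j : Fin M => (j : ℕ) < μ i.castSucc)).filter
          (fun j : Fin M => ¬ (j : ℕ) < nuF n r i)
          = Finset.univ.filter
            (fun j : Fin M => (j : ℕ) ∈ Finset.Ico (nuF n r i) (μ i.castSucc)) := by
        ext j
        simp only [Finset.mem_filter, Finset.mem_univ, true_and, Finset.mem_Ico]
        omega
      rw [hset]
      have h1 : (∏ j ∈ Finset.univ.filter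
            (fun j : Fin M => (j : ℕ) ∈ Finset.Ico (nuF n r i) (μ i.castSucc)),
          (y (fro n M r T' i.castSucc j) -
            a (((j : ℕ) + (n+1)) - ((i.castSucc : ℕ) + (fro n M r T' i.castSucc j : ℕ) + 1))))
          = ∏ t ∈ Finset.Ico (nuF n r i) (μ i.castSucc), (y 0 - a (t + (n - (i : ℕ)))) := by
        rw [← prod_fin_mem (Finset.Ico (nuF n r i) (μ i.castSucc))
          (fun t ht => lt_of_lt_of_le (Finset.mem_Ico.mp ht).2 (hM i.castSucc))
          (fun t => y 0 - a (t + (n - (i : ℕ))))]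
        apply Finset.prod_congr rfl
        intro j hj
        have hp : ¬ ((j : ℕ) < nuF n r i) := by
          have := (Finset.mem_filter.mp hj).2
          rw [Finset.mem_Ico] at this
          omega
        rw [fro_castSucc, if_neg hp]
        simp only [Fin.val_zero, Fin.coe_castSucc]
        have hi := i.isLt
        congr 2
        omega
      rw [h1, cE, Finset.prod_Ico_eq_prod_range, Finset.prod_Ico_eq_prod_range]
      have hlen : μ i.castSucc + (n - (i : ℕ)) - (r i + 1) = μ i.castSucc - nuF n r i := by
        have := hlow2 i; omega
      rw [hlen]
      apply Finset.prod_congr rfl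
      intro t _
      congr 2
      have := hlow2 i
      omega
  rw [Finset.prod_congr rfl (fun i _ => hrow i), Finset.prod_mul_distrib]
  rw [Wt]
  ring

end Comb3

section Comb4
variable {n M : ℕ} {R : Type*} [CommRing R]

theorem nuF_rT {μ : Fin (n+1) → ℕ} (T : Fin (n+1) → Fin M → Fin (n+1)) :
    nuF n (rT n M μ T) = nuT n M μ T := by
  funext j; simp only [nuF, rT, Nat.add_sub_cancel]

theorem rT_bounds {μ : Fin (n+1) → ℕ} (hμ : Antitone μ) (hM : ∀ i, μ i ≤ M)
    {T : Fin (n+1) → Fin M → Fin (n+1)} (hT : Cond (n+1) M μ T) (j : Fin n) :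
    μ j.succ + (n - 1 - (j : ℕ)) ≤ rT n M μ T j ∧
      rT n M μ T j < μ j.castSucc + (n - (j : ℕ)) := by
  have h1 := nuT_le (μ := μ) (T := T) hM j
  have h2 := le_nuT hμ hM hT j
  have hj := j.isLt
  simp only [rT]
  omega

theorem toSub_cond {μ : Fin (n+1) → ℕ} (hμ : Antitone μ)
    {T : Fin (n+1) → Fin M → Fin (n+1)} (hT : Cond (n+1) M μ T) :
    Cond n M (nuT n M μ T) (toSub n M T) := by
  refine ⟨?_, ?_, ?_⟩
  · intro i j hj
    simp only [toSub]
    by_cases hjμ : (j : ℕ) < μ i.castSucc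
    · have := (nuT_iff hT i j).not.mp hj
      push_neg at this
      have := this hjμ
      omega
    · have := hT.1 i.castSucc j hjμ
      omega
  · intro i i' j hii' hj
    have h := (nuT_iff hT i' j).mp hj
    have hlt := hT.2.1 i.castSucc i'.castSucc j (by rwa [Fin.castSucc_lt_castSucc_iff]) h.1
    simp only [toSub]
    omega
  · intro i j j' hjj' hj'
    have h := (nuT_iff hT i j').mp hj'
    have hle := hT.2.2 i.castSucc j j' hjj' h.1
    simp only [toSub]
    omega

theorem comb_step (y : Fin (n+1) → R) (a : ℕ → R) {μ : Fin (n+1) → ℕ}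
    (hμ : Antitone μ) (hM : ∀ i, μ i ≤ M) :
    ∑ T ∈ (Finset.univ : Finset (Fin (n+1) → Fin M → Fin (n+1))).filter (Cond (n+1) M μ),
        Wt (n+1) M y a μ T
    = (∏ k ∈ Finset.range (μ (Fin.last n)), (y 0 - a k)) *
      ∑ r ∈ Fintype.piFinset (fun j : Fin n =>
          Finset.Ico (μ j.succ + (n - 1 - (j : ℕ))) (μ j.castSucc + (n - (j : ℕ)))),
        (∏ j : Fin n, cE (y 0) a (r j) (μ j.castSucc + (n - (j : ℕ)))) *
        ∑ T' ∈ (Finset.univ : Finset (Fin n → Fin M → Fin n)).filter (Cond n M (nuF n r)),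
          Wt n M (y ∘ Fin.succ) a (nuF n r) T' := by
  have hRHS : (∏ k ∈ Finset.range (μ (Fin.last n)), (y 0 - a k)) *
      ∑ r ∈ Fintype.piFinset (fun j : Fin n =>
          Finset.Ico (μ j.succ + (n - 1 - (j : ℕ))) (μ j.castSucc + (n - (j : ℕ)))),
        (∏ j : Fin n, cE (y 0) a (r j) (μ j.castSucc + (n - (j : ℕ)))) *
        ∑ T' ∈ (Finset.univ : Finset (Fin n → Fin M → Fin n)).filter (Cond n M (nuF n r)),
          Wt n M (y ∘ Fin.succ) a (nuF n r) T'
      = ∑ x ∈ (Fintype.piFinset (fun j : Fin n =>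
          Finset.Ico (μ j.succ + (n - 1 - (j : ℕ))) (μ j.castSucc + (n - (j : ℕ))))).sigma
          (fun r => (Finset.univ : Finset (Fin n → Fin M → Fin n)).filter (Cond n M (nuF n r))),
        ((∏ k ∈ Finset.range (μ (Fin.last n)), (y 0 - a k)) *
          (∏ j : Fin n, cE (y 0) a (x.1 j) (μ j.castSucc + (n - (j : ℕ)))) *
          Wt n M (y ∘ Fin.succ) a (nuF n x.1) x.2) := by
    rw [Finset.mul_sum, Finset.sum_sigma]
    apply Finset.sum_congr rfl
    intro r _
    rw [← mul_assoc, Finset.mul_sum]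
  rw [hRHS]
  apply Finset.sum_bij'
    (i := fun T _ => (⟨rT n M μ T, toSub n M T⟩ :
      Σ _ : Fin n → ℕ, Fin n → Fin M → Fin n))
    (j := fun x _ => fro n M x.1 x.2)
  · intro T hT
    rw [Finset.mem_filter] at hT
    have hc := hT.2
    rw [Finset.mem_sigma]
    constructor
    · rw [Fintype.mem_piFinset]
      intro j
      rw [Finset.mem_Ico]
      exact rT_bounds hμ hM hc j
    · rw [Finset.mem_filter]
      refine ⟨Finset.mem_univ _, ?_⟩
      rw [nuF_rT]
      exact toSub_cond hμ hc
  · intro x hx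
    rw [Finset.mem_sigma] at hx
    rw [Finset.mem_filter]
    refine ⟨Finset.mem_univ _, ?_⟩
    apply fro_cond hμ hM
    · intro j
      have := Fintype.mem_piFinset.mp hx.1 j
      rw [Finset.mem_Ico] at this
      exact this
    · exact (Finset.mem_filter.mp hx.2).2
  · intro T hT
    rw [Finset.mem_filter] at hT
    exact fro_inv1 hμ hT.2
  · intro x hx
    rw [Finset.mem_sigma] at hx
    have hr : ∀ j : Fin n, μ j.succ + (n - 1 - (j : ℕ)) ≤ x.1 j ∧
        x.1 j < μ j.castSucc + (n - (j : ℕ)) := by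
      intro j
      have := Fintype.mem_piFinset.mp hx.1 j
      rwa [Finset.mem_Ico] at this
    have hT' := (Finset.mem_filter.mp hx.2).2
    obtain ⟨h1, h2⟩ := fro_inv2 hM hr hT'
    exact Sigma.ext h1 (by rw [h2])
  · intro T hT
    rw [Finset.mem_filter] at hT
    have hc := hT.2
    have hr := fun j => rT_bounds hμ hM hc j
    have := wt_fro y a hM hr (toSub n M T)
    rw [fro_inv1 hμ hc] at this
    rw [this, nuF_rT]

end Comb4

section Det
variable {R : Type*} [CommRing R]

def mmF (n : ℕ) (μ : Fin (n+1) → ℕ) : Fin (n+1) → ℕ := fun j => μ j + (n - (j : ℕ))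

theorem mmF_mono {n : ℕ} {μ : Fin (n+1) → ℕ} (hμ : Antitone μ) (j : Fin n) :
    mmF n μ j.succ ≤ mmF n μ j.castSucc := by
  have h1 : μ j.succ ≤ μ j.castSucc := hμ (le_of_lt (Fin.castSucc_lt_succ (i := j)))
  have hj := j.isLt
  simp only [mmF, Fin.val_succ, Fin.coe_castSucc]
  omega

def matL (n : ℕ) (y : Fin (n+1) → R) : Matrix (Fin (n+1)) (Fin (n+1)) R :=
  Matrix.of fun i k => if k = 0 then 1 else if k = i then y i - y 0 else 0

def matB (n : ℕ) (y : Fin (n+1) → R) (a : ℕ → R) (μ : Fin (n+1) → ℕ) :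
    Matrix (Fin (n+1)) (Fin (n+1)) R :=
  Matrix.of fun i j => if i = 0 then Pp a (mmF n μ j) (y 0)
    else ∑ r ∈ Finset.range (mmF n μ j), cE (y 0) a r (mmF n μ j) * Pp a r (y i)

def ddF (n : ℕ) (y : Fin (n+1) → R) (a : ℕ → R) (μ : Fin (n+1) → ℕ) : Fin (n+1) → R :=
  fun j => if h : (j : ℕ) < n
    then ∏ k ∈ Finset.Ico (mmF n μ ⟨(j : ℕ)+1, by omega⟩) (mmF n μ j), (y 0 - a k)
    else 0

def matU (n : ℕ) (y : Fin (n+1) → R) (a : ℕ → R) (μ : Fin (n+1) → ℕ) :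
    Matrix (Fin (n+1)) (Fin (n+1)) R :=
  Matrix.of fun k j => if k = j then 1
    else if (k : ℕ) = (j : ℕ) + 1 then -(ddF n y a μ j) else 0

theorem ddF_castSucc (n : ℕ) (y : Fin (n+1) → R) (a : ℕ → R) (μ : Fin (n+1) → ℕ) (j : Fin n) :
    ddF n y a μ j.castSucc
      = ∏ k ∈ Finset.Ico (mmF n μ j.succ) (mmF n μ j.castSucc), (y 0 - a k) := by
  have hj : ((j.castSucc : Fin (n+1)) : ℕ) < n := j.isLt
  rw [ddF, dif_pos hj]
  congr 1

theorem matA_eq (n : ℕ) (y : Fin (n+1) → R) (a : ℕ → R) (μ : Fin (n+1) → ℕ) :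
    (Matrix.of fun i j : Fin (n+1) => Pp a (mmF n μ j) (y i))
      = matL n y * matB n y a μ := by
  ext i j
  rw [Matrix.mul_apply]
  have hexp : ∀ k : Fin (n+1), matL n y i k * matB n y a μ k j
      = (if k = 0 then Pp a (mmF n μ j) (y 0) else 0)
        + (if k = i then (if i = 0 then 0 else
            (y i - y 0) * ∑ r ∈ Finset.range (mmF n μ j), cE (y 0) a r (mmF n μ j) * Pp a r (y i))
          else 0) := by
    intro k
    by_cases hk0 : k = 0
    · subst hk0
      by_cases hi0 : (0 : Fin (n+1)) = i
      · rw [if_pos hi0, ← hi0]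
        simp [matL, matB]
      · rw [if_neg hi0]
        simp [matL, matB]
    · rw [if_neg hk0]
      by_cases hki : k = i
      · subst hki
        simp [matL, matB, Matrix.of_apply, if_neg hk0]
      · simp [matL, matB, if_neg hk0, if_neg hki]
  rw [Finset.sum_congr rfl (fun k _ => hexp k), Finset.sum_add_distrib,
    Finset.sum_ite_eq' Finset.univ (0 : Fin (n+1)),
    Finset.sum_ite_eq' Finset.univ i]
  simp only [Finset.mem_univ, if_true]
  by_cases hi0 : i = 0
  · subst hi0
    simp [Matrix.of_apply]
  · rw [if_neg hi0, Matrix.of_apply]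
    rw [keyP a (y 0) (y i) (mmF n μ j)]

theorem det_matL (n : ℕ) (y : Fin (n+1) → R) :
    (matL n y).det = ∏ i : Fin n, (y i.succ - y 0) := by
  have htri : (matL n y).BlockTriangular OrderDual.toDual := by
    intro i j hij
    have hij' : i < j := hij
    have hj0 : j ≠ 0 := by
      intro h; subst h; exact absurd hij' (by simp [Fin.not_lt_zero])
    have hji : j ≠ i := ne_of_gt hij'
    simp [matL, hj0, hji]
  rw [Matrix.det_of_lowerTriangular _ htri, Fin.prod_univ_succ]
  simp [matL, Fin.succ_ne_zero]

theorem det_matU (n : ℕ) (y : Fin (n+1) → R) (a : ℕ → R) (μ : Fin (n+1) → ℕ) :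
    (matU n y a μ).det = 1 := by
  have htri : (matU n y a μ).BlockTriangular OrderDual.toDual := by
    intro k j hkj
    have hkj' : k < j := hkj
    have h1 : k ≠ j := ne_of_lt hkj'
    have h2 : (k : ℕ) ≠ (j : ℕ) + 1 := by
      have : (k : ℕ) < (j : ℕ) := hkj'
      omega
    simp [matU, h1, h2]
  rw [Matrix.det_of_lowerTriangular _ htri]
  simp [matU]

def mmS (n : ℕ) (μ : Fin (n+1) → ℕ) : Fin (n+1) → ℕ :=
  fun j => if h : (j : ℕ) < n then mmF n μ ⟨(j : ℕ)+1, Nat.succ_lt_succ h⟩ else 0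

theorem mmS_castSucc (n : ℕ) (μ : Fin (n+1) → ℕ) (j : Fin n) :
    mmS n μ j.castSucc = mmF n μ j.succ := by
  rw [mmS, dif_pos (show ((j.castSucc : Fin (n+1)) : ℕ) < n from j.isLt)]
  apply congrArg
  apply Fin.ext
  simp

theorem mmS_last (n : ℕ) (μ : Fin (n+1) → ℕ) : mmS n μ (Fin.last n) = 0 := by
  rw [mmS, dif_neg]
  simp

def matB2 (n : ℕ) (y : Fin (n+1) → R) (a : ℕ → R) (μ : Fin (n+1) → ℕ) :
    Matrix (Fin (n+1)) (Fin (n+1)) R :=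
  Matrix.of fun i j =>
    if i = 0 then (if j = Fin.last n then Pp a (mmF n μ (Fin.last n)) (y 0) else 0)
    else ∑ r ∈ Finset.Ico (mmS n μ j) (mmF n μ j),
      cE (y 0) a r (mmF n μ j) * Pp a r (y i)

theorem matBU_eq (n : ℕ) (y : Fin (n+1) → R) (a : ℕ → R) (μ : Fin (n+1) → ℕ)
    (hμ : Antitone μ) : matB n y a μ * matU n y a μ = matB2 n y a μ := by
  ext i j
  rw [Matrix.mul_apply]
  have hU : ∀ k : Fin (n+1), matU n y a μ k j
      = (if k = j then (1:R) else 0) + (if (k : ℕ) = (j : ℕ) + 1 then -(ddF n y a μ j) else 0) := by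
    intro k
    by_cases hkj : k = j
    · subst hkj
      have : ¬ ((k : ℕ) = (k : ℕ) + 1) := by omega
      simp [matU, this]
    · have : (k : ℕ) ≠ (j : ℕ) ∨ True := Or.inr trivial
      simp [matU, hkj]
  have hsum : ∀ k : Fin (n+1), matB n y a μ i k * matU n y a μ k j
      = (if k = j then matB n y a μ i j else 0)
        + (if (k : ℕ) = (j : ℕ) + 1 then matB n y a μ i k * (-(ddF n y a μ j)) else 0) := by
    intro k
    rw [hU k, mul_add]
    congr 1
    · by_cases hkj : k = j
      · subst hkj; simp
      · simp [hkj]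
    · by_cases hk : (k : ℕ) = (j : ℕ) + 1
      · simp [hk]
      · simp [hk]
  rw [Finset.sum_congr rfl (fun k _ => hsum k), Finset.sum_add_distrib,
    Finset.sum_ite_eq' Finset.univ j (fun _ => matB n y a μ i j)]
  simp only [Finset.mem_univ, if_true]
  -- second sum
  induction j using Fin.lastCases with
  | last =>
    have hz : ∀ k : Fin (n+1), ¬ ((k : ℕ) = ((Fin.last n : Fin (n+1)) : ℕ) + 1) := by
      intro k
      have := k.isLt
      simp only [Fin.val_last]
      omega
    rw [Finset.sum_congr rfl (fun k _ => if_neg (hz k)), Finset.sum_const_zero, add_zero]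
    by_cases hi : i = 0
    · subst hi; simp [matB, matB2]
    · simp only [matB, matB2, Matrix.of_apply, if_neg hi, mmS_last]
      rw [Finset.range_eq_Ico]
  | cast j =>
    have hcollapse : (∑ k : Fin (n+1), if (k : ℕ) = ((j.castSucc : Fin (n+1)) : ℕ) + 1
        then matB n y a μ i k * (-(ddF n y a μ j.castSucc)) else 0)
        = matB n y a μ i j.succ * (-(ddF n y a μ j.castSucc)) := by
      have hiff : ∀ k : Fin (n+1), ((k : ℕ) = ((j.castSucc : Fin (n+1)) : ℕ) + 1) ↔ k = j.succ := by
        intro k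
        rw [Fin.ext_iff]
        simp
      rw [Finset.sum_congr rfl (fun k _ => by rw [if_congr (hiff k) rfl rfl])]
      rw [Finset.sum_ite_eq' Finset.univ j.succ (fun k => matB n y a μ i k * (-(ddF n y a μ j.castSucc)))]
      simp
    rw [hcollapse, ddF_castSucc]
    have hle : mmF n μ j.succ ≤ mmF n μ j.castSucc := mmF_mono hμ j
    have hlastne : j.castSucc ≠ Fin.last n := ne_of_lt (Fin.castSucc_lt_last j)
    by_cases hi : i = 0
    · subst hi
      have e1 : matB n y a μ 0 j.castSucc = Pp a (mmF n μ j.castSucc) (y 0) := by simp [matB]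
      have e2 : matB n y a μ 0 j.succ = Pp a (mmF n μ j.succ) (y 0) := by simp [matB]
      have e3 : matB2 n y a μ 0 j.castSucc = 0 := by simp [matB2, hlastne]
      rw [e1, e2, e3, Pp_split a hle (y 0)]
      ring
    · simp only [matB, matB2, Matrix.of_apply, if_neg hi, mmS_castSucc]
      have hsplit : ∑ r ∈ Finset.range (mmF n μ j.castSucc), cE (y 0) a r (mmF n μ j.castSucc) * Pp a r (y i)
          = (∑ r ∈ Finset.range (mmF n μ j.succ), cE (y 0) a r (mmF n μ j.castSucc) * Pp a r (y i))
            + ∑ r ∈ Finset.Ico (mmF n μ j.succ) (mmF n μ j.castSucc), cE (y 0) a r (mmF n μ j.castSucc) * Pp a r (y i) := by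
        rw [Finset.range_eq_Ico,
          ← Finset.sum_Ico_consecutive (fun r => cE (y 0) a r (mmF n μ j.castSucc) * Pp a r (y i))
            (Nat.zero_le _) hle, Finset.range_eq_Ico]
      rw [hsplit]
      have hterm : ∀ r ∈ Finset.range (mmF n μ j.succ),
          cE (y 0) a r (mmF n μ j.castSucc) * Pp a r (y i)
          = (cE (y 0) a r (mmF n μ j.succ) * Pp a r (y i)) *
              ∏ k ∈ Finset.Ico (mmF n μ j.succ) (mmF n μ j.castSucc), (y 0 - a k) := by
        intro r hr
        rw [Finset.mem_range] at hr
        rw [cE_split (y 0) a (by omega : r + 1 ≤ mmF n μ j.succ) hle]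
        ring
      rw [Finset.sum_congr rfl hterm, ← Finset.sum_mul]
      ring

def matC (n : ℕ) (y : Fin (n+1) → R) (a : ℕ → R) (μ : Fin (n+1) → ℕ) :
    Matrix (Fin n) (Fin n) R :=
  Matrix.of fun i j => ∑ r ∈ Finset.Ico (mmF n μ j.succ) (mmF n μ j.castSucc),
    cE (y 0) a r (mmF n μ j.castSucc) * Pp a r (y i.succ)

theorem det_matB2 (n : ℕ) (y : Fin (n+1) → R) (a : ℕ → R) (μ : Fin (n+1) → ℕ) :
    (matB2 n y a μ).det = (-1)^n * Pp a (mmF n μ (Fin.last n)) (y 0) * (matC n y a μ).det := by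
  rw [Matrix.det_succ_row_zero]
  rw [Finset.sum_eq_single (Fin.last n)]
  · have hsub : (matB2 n y a μ).submatrix Fin.succ (Fin.last n).succAbove = matC n y a μ := by
      ext i j
      rw [Matrix.submatrix_apply, Fin.succAbove_last]
      simp only [matB2, matC, Matrix.of_apply, if_neg (Fin.succ_ne_zero i), mmS_castSucc]
    rw [hsub]
    have h0l : matB2 n y a μ 0 (Fin.last n) = Pp a (mmF n μ (Fin.last n)) (y 0) := by
      simp [matB2]
    rw [h0l, Fin.val_last]
  · intro j _ hj
    have : matB2 n y a μ 0 j = 0 := by simp [matB2, hj]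
    rw [this]
    ring
  · intro h
    exact absurd (Finset.mem_univ _) h

theorem det_matC (n : ℕ) (y : Fin (n+1) → R) (a : ℕ → R) (μ : Fin (n+1) → ℕ) :
    (matC n y a μ).det
      = ∑ r ∈ Fintype.piFinset (fun j : Fin n =>
          Finset.Ico (mmF n μ j.succ) (mmF n μ j.castSucc)),
        (∏ j : Fin n, cE (y 0) a (r j) (mmF n μ j.castSucc)) *
          (Matrix.of fun i j : Fin n => Pp a (r j) (y i.succ)).det := by
  rw [← Matrix.det_transpose]
  have hT : (matC n y a μ)ᵀ = fun j => ∑ r ∈ Finset.Ico (mmF n μ j.succ) (mmF n μ j.castSucc),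
      cE (y 0) a r (mmF n μ j.castSucc) • (fun i : Fin n => Pp a r (y i.succ)) := by
    funext j i
    rw [Finset.sum_apply]
    simp only [Pi.smul_apply, smul_eq_mul]
    rfl
  have hdet : ((matC n y a μ)ᵀ).det = Matrix.detRowAlternating ((matC n y a μ)ᵀ) := rfl
  rw [hdet, hT]
  have hbig := (Matrix.detRowAlternating (R := R) (n := Fin n)).toMultilinearMap.map_sum_finset
    (fun j r => cE (y 0) a r (mmF n μ j.castSucc) • (fun i : Fin n => Pp a r (y i.succ)))
    (fun j => Finset.Ico (mmF n μ j.succ) (mmF n μ j.castSucc))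
  refine Eq.trans hbig ?_
  apply Finset.sum_congr rfl
  intro r _
  rw [MultilinearMap.map_smul_univ]
  rw [smul_eq_mul]
  congr 1
  rw [← Matrix.det_transpose]
  rfl

theorem det_step (n : ℕ) (y : Fin (n+1) → R) (a : ℕ → R) (μ : Fin (n+1) → ℕ)
    (hμ : Antitone μ) :
    (Matrix.of fun i j : Fin (n+1) => Pp a (mmF n μ j) (y i)).det
      = (∏ i : Fin n, (y 0 - y i.succ)) * Pp a (μ (Fin.last n)) (y 0) *
        ∑ r ∈ Fintype.piFinset (fun j : Fin n =>
          Finset.Ico (mmF n μ j.succ) (mmF n μ j.castSucc)),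
          (∏ j : Fin n, cE (y 0) a (r j) (mmF n μ j.castSucc)) *
            (Matrix.of fun i j : Fin n => Pp a (r j) (y i.succ)).det := by
  rw [matA_eq n y a μ, Matrix.det_mul]
  have h2 : (matB n y a μ).det = (matB2 n y a μ).det := by
    rw [← matBU_eq n y a μ hμ, Matrix.det_mul, det_matU, mul_one]
  rw [h2, det_matB2, det_matL, det_matC]
  have hmm : mmF n μ (Fin.last n) = μ (Fin.last n) := by simp [mmF]
  rw [hmm]
  have hsign' : (-1:R)^n * ∏ i : Fin n, (y i.succ - y 0) = ∏ i : Fin n, (y 0 - y i.succ) := by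
    have hconst : ((-1:R)^n) = ∏ _i : Fin n, (-1:R) := by
      rw [Finset.prod_const, Finset.card_univ, Fintype.card_fin]
    rw [hconst, ← Finset.prod_mul_distrib]
    apply Finset.prod_congr rfl
    intro i _
    ring
  rw [← hsign']
  ring

end Det


theorem aux (n : ℕ) : ∀ (M : ℕ) {R : Type*} [CommRing R] (y : Fin n → R) (a : ℕ → R)
    (μ : Fin n → ℕ), Antitone μ → (∀ i, μ i ≤ M) →
    Matrix.det (Matrix.of fun i j : Fin n => Pp a (μ j + (n - 1 - (j : ℕ))) (y i))
      = (∏ i : Fin n, ∏ j ∈ Finset.univ.filter (fun j : Fin n => i < j), (y i - y j)) *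
        ∑ T ∈ (Finset.univ : Finset (Fin n → Fin M → Fin n)).filter (Cond n M μ),
          Wt n M y a μ T := by
  induction n with
  | zero =>
    intro M R _ y a μ hμ hM
    have hfil : (Finset.univ : Finset (Fin 0 → Fin M → Fin 0)).filter (Cond 0 M μ)
        = Finset.univ := by
      apply Finset.filter_true_of_mem
      intro T _
      exact ⟨fun i => i.elim0, fun i => i.elim0, fun i => i.elim0⟩
    rw [hfil]
    have hwt : ∀ T : Fin 0 → Fin M → Fin 0, Wt 0 M y a μ T = 1 := by
      intro T
      rw [Wt]
      exact Finset.prod_of_isEmpty _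
    rw [Finset.sum_congr rfl (fun T _ => hwt T)]
    rw [Matrix.det_fin_zero]
    rw [Finset.prod_of_isEmpty]
    simp
  | succ n ih =>
    intro M R _ y a μ hμ hM
    have hmat : (Matrix.of fun i j : Fin (n+1) => Pp a (μ j + (n + 1 - 1 - (j : ℕ))) (y i))
        = (Matrix.of fun i j : Fin (n+1) => Pp a (mmF n μ j) (y i)) := by
      have he : ∀ j : Fin (n+1), μ j + (n + 1 - 1 - (j : ℕ)) = mmF n μ j := by
        intro j; simp only [mmF]; omega
      ext i j
      rw [Matrix.of_apply, Matrix.of_apply, he j]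
    rw [hmat, det_step n y a μ hμ, vdm_split n y, comb_step y a hμ hM]
    have hIco : (fun j : Fin n => Finset.Ico (mmF n μ j.succ) (mmF n μ j.castSucc))
        = fun j : Fin n => Finset.Ico (μ j.succ + (n - 1 - (j : ℕ)))
            (μ j.castSucc + (n - (j : ℕ))) := by
      funext j
      have hj := j.isLt
      have h1 : mmF n μ j.succ = μ j.succ + (n - 1 - (j : ℕ)) := by
        simp only [mmF, Fin.val_succ]; omega
      have h2 : mmF n μ j.castSucc = μ j.castSucc + (n - (j : ℕ)) := by
        simp only [mmF, Fin.coe_castSucc]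
      rw [h1, h2]
    rw [hIco]
    have hP0 : Pp a (μ (Fin.last n)) (y 0)
        = ∏ k ∈ Finset.range (μ (Fin.last n)), (y 0 - a k) := rfl
    rw [hP0]
    -- per-term rewriting of the determinant using the induction hypothesis
    have hterm : ∀ r ∈ Fintype.piFinset (fun j : Fin n =>
        Finset.Ico (μ j.succ + (n - 1 - (j : ℕ))) (μ j.castSucc + (n - (j : ℕ)))),
        (∏ j : Fin n, cE (y 0) a (r j) (mmF n μ j.castSucc)) *
          (Matrix.of fun i j : Fin n => Pp a (r j) (y i.succ)).det
        = (∏ j : Fin n, cE (y 0) a (r j) (μ j.castSucc + (n - (j : ℕ)))) *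
          ((∏ i : Fin n, ∏ j ∈ Finset.univ.filter (fun j : Fin n => i < j),
              (y i.succ - y j.succ)) *
            ∑ T' ∈ (Finset.univ : Finset (Fin n → Fin M → Fin n)).filter
                (Cond n M (nuF n r)),
              Wt n M (y ∘ Fin.succ) a (nuF n r) T') := by
      intro r hr
      have hrb : ∀ j : Fin n, μ j.succ + (n - 1 - (j : ℕ)) ≤ r j ∧
          r j < μ j.castSucc + (n - (j : ℕ)) := by
        intro j
        have := Fintype.mem_piFinset.mp hr j
        rwa [Finset.mem_Ico] at this
      have hrj : ∀ j : Fin n, nuF n r j + (n - 1 - (j : ℕ)) = r j := by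
        intro j
        have := hrb j
        have hj := j.isLt
        simp only [nuF]
        omega
      have hnulow : ∀ j : Fin n, μ j.succ ≤ nuF n r j := by
        intro j; have := hrb j; have hj := j.isLt; simp only [nuF]; omega
      have hnuhigh : ∀ j : Fin n, nuF n r j ≤ μ j.castSucc := by
        intro j; have := hrb j; have hj := j.isLt; simp only [nuF]; omega
      have hanti : Antitone (nuF n r) := by
        intro j j' hle
        rcases eq_or_lt_of_le hle with h | h
        · rw [h]
        · calc nuF n r j' ≤ μ j'.castSucc := hnuhigh j'
            _ ≤ μ j.succ := hμ (by
              rw [Fin.le_def]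
              simp only [Fin.val_succ, Fin.coe_castSucc]
              exact h)
            _ ≤ nuF n r j := hnulow j
      have hbound : ∀ j : Fin n, nuF n r j ≤ M := by
        intro j
        exact le_trans (hnuhigh j) (hM j.castSucc)
      have hmat2 : (Matrix.of fun i j : Fin n => Pp a (r j) (y i.succ))
          = (Matrix.of fun i j : Fin n =>
              Pp a (nuF n r j + (n - 1 - (j : ℕ))) ((y ∘ Fin.succ) i)) := by
        ext i j
        rw [Matrix.of_apply, Matrix.of_apply, hrj j]
        rfl
      rw [hmat2, ih M (y ∘ Fin.succ) a (nuF n r) hanti hbound]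
      have hcE : ∀ j : Fin n, cE (y 0) a (r j) (mmF n μ j.castSucc)
          = cE (y 0) a (r j) (μ j.castSucc + (n - (j : ℕ))) := by
        intro j
        simp only [mmF, Fin.coe_castSucc]
      rw [Finset.prod_congr rfl (fun j _ => hcE j)]
      have hvdm' : (∏ i : Fin n, ∏ j ∈ Finset.univ.filter (fun j : Fin n => i < j),
          ((y ∘ Fin.succ) i - (y ∘ Fin.succ) j))
          = ∏ i : Fin n, ∏ j ∈ Finset.univ.filter (fun j : Fin n => i < j),
              (y i.succ - y j.succ) := rfl
      rw [hvdm']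
    rw [Finset.sum_congr rfl hterm]
    -- final algebra
    rw [show (∑ r ∈ Fintype.piFinset (fun j : Fin n =>
        Finset.Ico (μ j.succ + (n - 1 - (j : ℕ))) (μ j.castSucc + (n - (j : ℕ)))),
        (∏ j : Fin n, cE (y 0) a (r j) (μ j.castSucc + (n - (j : ℕ)))) *
          ((∏ i : Fin n, ∏ j ∈ Finset.univ.filter (fun j : Fin n => i < j),
              (y i.succ - y j.succ)) *
            ∑ T' ∈ (Finset.univ : Finset (Fin n → Fin M → Fin n)).filter
                (Cond n M (nuF n r)),
              Wt n M (y ∘ Fin.succ) a (nuF n r) T'))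
        = (∏ i : Fin n, ∏ j ∈ Finset.univ.filter (fun j : Fin n => i < j),
              (y i.succ - y j.succ)) *
          ∑ r ∈ Fintype.piFinset (fun j : Fin n =>
            Finset.Ico (μ j.succ + (n - 1 - (j : ℕ))) (μ j.castSucc + (n - (j : ℕ)))),
            (∏ j : Fin n, cE (y 0) a (r j) (μ j.castSucc + (n - (j : ℕ)))) *
              ∑ T' ∈ (Finset.univ : Finset (Fin n → Fin M → Fin n)).filter
                  (Cond n M (nuF n r)),
                Wt n M (y ∘ Fin.succ) a (nuF n r) T' from by
      rw [Finset.mul_sum]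
      apply Finset.sum_congr rfl
      intro r _
      ring]
    ring

end FactorialSchur

open MvPolynomial

open scoped Classical in
/-- Combinatorial formula for the factorial Schur polynomial: the determinant
`det[(y_i|A)^{μ_j+n-j}]` equals the Vandermonde times the sum, over all reverse
tableaux `T` of shape `μ` with entries in `{1,…,n}` (encoded as functions
`Fin n → Fin (μ_1) → Fin n`, value `T i j` encoding the entry `T(i,j) = (T i j)+1`,
normalized to `0` outside the diagram, strictly decreasing down columns and weakly
decreasing along rows), of `Π_{(i,j)∈μ} (y_{T(i,j)} - A_{j-i+n+1-T(i,j)})`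
(all indices 1-based; here `A k` encodes `A_{k+1}`). -/
theorem stmt15 (n : ℕ) (hn : 0 < n) (A : ℕ → ℂ) (μ : Fin n → ℕ) (hμ : Antitone μ) :
    Matrix.det (Matrix.of fun i j : Fin n =>
        ∏ k ∈ Finset.range (μ j + (n - 1 - (j : ℕ))), (X i - C (A k)))
      = (∏ i : Fin n, ∏ j ∈ Finset.univ.filter (fun j : Fin n => i < j), (X i - X j)) *
        ∑ T ∈ (Finset.univ : Finset (Fin n → Fin (μ ⟨0, hn⟩) → Fin n)).filter
          (fun T =>
            (∀ (i : Fin n) (j : Fin (μ ⟨0, hn⟩)), ¬ ((j : ℕ) < μ i) → T i j = ⟨0, hn⟩) ∧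
            (∀ (i i' : Fin n) (j : Fin (μ ⟨0, hn⟩)), i < i' → (j : ℕ) < μ i' →
              (T i' j : ℕ) < (T i j : ℕ)) ∧
            (∀ (i : Fin n) (j j' : Fin (μ ⟨0, hn⟩)), j ≤ j' → (j' : ℕ) < μ i →
              (T i j' : ℕ) ≤ (T i j : ℕ))),
          ∏ i : Fin n, ∏ j ∈ Finset.univ.filter (fun j : Fin (μ ⟨0, hn⟩) => (j : ℕ) < μ i),
            (X (T i j) - C (A (((j : ℕ) + n) - ((i : ℕ) + (T i j : ℕ) + 1)))) := by
  have hM : ∀ i : Fin n, μ i ≤ μ ⟨0, hn⟩ := by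
    intro i
    exact hμ (by rw [Fin.le_def]; exact Nat.zero_le _)
  have h := aux n (μ ⟨0, hn⟩) (X : Fin n → MvPolynomial (Fin n) ℂ)
    (fun k => C (A k)) μ hμ hM
  have hfil : (Finset.univ : Finset (Fin n → Fin (μ ⟨0, hn⟩) → Fin n)).filter
      (fun T =>
        (∀ (i : Fin n) (j : Fin (μ ⟨0, hn⟩)), ¬ ((j : ℕ) < μ i) → T i j = ⟨0, hn⟩) ∧
        (∀ (i i' : Fin n) (j : Fin (μ ⟨0, hn⟩)), i < i' → (j : ℕ) < μ i' →
          (T i' j : ℕ) < (T i j : ℕ)) ∧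
        (∀ (i : Fin n) (j j' : Fin (μ ⟨0, hn⟩)), j ≤ j' → (j' : ℕ) < μ i →
          (T i j' : ℕ) ≤ (T i j : ℕ)))
      = (Finset.univ : Finset (Fin n → Fin (μ ⟨0, hn⟩) → Fin n)).filter
          (Cond n (μ ⟨0, hn⟩) μ) := by
    apply Finset.filter_congr
    intro T _
    unfold Cond
    constructor
    · rintro ⟨h1, h2, h3⟩
      exact ⟨fun i j hj => by rw [h1 i j hj], h2, h3⟩
    · rintro ⟨h1, h2, h3⟩
      refine ⟨fun i j hj => ?_, h2, h3⟩
      apply Fin.ext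
      exact h1 i j hj
  rw [hfil]
  exact h
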